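/- Let E¹, E⁰, Y be topological spaces with E⁰ Hausdorff, let s : E¹ → E⁰ and ψ : E¹ → Y be continuous, and let α : Y → E⁰ be a continuous surjection such that α⁻¹(K) is compact for every compact subset K of E⁰. Equip F = {(e, y) ∈ E¹ × Y : s(e) = α(y)} with the subspace topology of the product, and define r_I : F → Y by r_I(e, y) = ψ(e). Then for every compact subset K of Y, the preimage r_I⁻¹(K) is compact if and only if ψ⁻¹(K) is compact. -/

import Mathlib

/-- Let `E⁰` be Hausdorff, `s : E¹ → E⁰` and `ψ : E¹ → Y` continuous, and `α : Y → E⁰` a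
continuous surjection with compact preimages of compact sets. Equip the fibred product
`F = {(e, y) | s e = α y}` with the subspace topology and let `r_I (e, y) = ψ e`. Then for every
compact `K ⊆ Y`, the preimage `r_I ⁻¹' K` is compact iff `ψ ⁻¹' K` is compact. -/
theorem statement_3 {E1 E0 Y : Type*} [TopologicalSpace E1] [TopologicalSpace E0]
    [TopologicalSpace Y] [T2Space E0] (s : E1 → E0) (ψ : E1 → Y) (α : Y → E0)
    (hs : Continuous s) (hψ : Continuous ψ) (hα : Continuous α)
    (hαsurj : Function.Surjective α)
    (hαproper : ∀ K : Set E0, IsCompact K → IsCompact (α ⁻¹' K))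
    (K : Set Y) (hK : IsCompact K) :
    IsCompact ((fun p : {p : E1 × Y // s p.1 = α p.2} => ψ p.val.1) ⁻¹' K) ↔
      IsCompact (ψ ⁻¹' K) := by
  have hDclosed : IsClosed {p : E1 × Y | s p.1 = α p.2} :=
    isClosed_eq (hs.comp continuous_fst) (hα.comp continuous_snd)
  constructor
  · intro h
    have himg : ψ ⁻¹' K =
        (fun p : {p : E1 × Y // s p.1 = α p.2} => p.val.1) ''
          ((fun p : {p : E1 × Y // s p.1 = α p.2} => ψ p.val.1) ⁻¹' K) := by
      ext e
      constructor
      · intro he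
        obtain ⟨y, hy⟩ := hαsurj (s e)
        exact ⟨⟨(e, y), hy.symm⟩, he, rfl⟩
      · rintro ⟨⟨⟨e', y⟩, hp⟩, hmem, rfl⟩
        exact hmem
    rw [himg]
    exact h.image (continuous_fst.comp continuous_subtype_val)
  · intro h
    have hC : IsCompact ((ψ ⁻¹' K) ×ˢ (α ⁻¹' (s '' (ψ ⁻¹' K)))) :=
      h.prod (hαproper _ (h.image hs))
    have hA : IsCompact (((ψ ⁻¹' K) ×ˢ (α ⁻¹' (s '' (ψ ⁻¹' K)))) ∩
        {p : E1 × Y | s p.1 = α p.2}) := hC.inter_right hDclosed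
    have key : Subtype.val '' ((fun p : {p : E1 × Y // s p.1 = α p.2} => ψ p.val.1) ⁻¹' K)
        = ((ψ ⁻¹' K) ×ˢ (α ⁻¹' (s '' (ψ ⁻¹' K)))) ∩ {p : E1 × Y | s p.1 = α p.2} := by
      ext ⟨e, y⟩
      simp only [Set.mem_image, Set.mem_inter_iff, Set.mem_prod, Set.mem_preimage,
        Set.mem_setOf_eq]
      constructor
      · rintro ⟨⟨⟨e', y'⟩, hp⟩, hmem, heq⟩
        cases heq
        exact ⟨⟨hmem, ⟨e, hmem, hp⟩⟩, hp⟩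
      · rintro ⟨⟨h1, _⟩, hD⟩
        exact ⟨⟨(e, y), hD⟩, h1, rfl⟩
    rw [Topology.IsEmbedding.subtypeVal.isCompact_iff, key]
    exact hA
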